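/- (POD inverse inequality) Let Y be a real inner product space and G : X → Y a linear map. Define the matrix S ∈ ℝ^{d_p×d_p} by S_{ij} = ⟨G ψ_i, G ψ_j⟩ and let ‖S‖₂ denote its spectral norm. Then for every v in span{ψ_1, …, ψ_{d_p}}, ‖G v‖ ≤ √‖S‖₂ · ‖v‖. -/

import Mathlib

open scoped RealInnerProductSpace
open Finset

/-- POD inverse inequality: for `v` in the span of the POD modes,
`‖G v‖ ≤ √‖S‖₂ ‖v‖` where `S` is the matrix of inner products of the `G ψ k`. -/
theorem pod_inverse_inequality
    {X : Type*} [NormedAddCommGroup X] [InnerProductSpace ℝ X]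
    (M : ℕ) (hM : 1 ≤ M) (u : Fin M → X)
    (K : Matrix (Fin M) (Fin M) ℝ)
    (hK : ∀ i j, K i j = (1 / (M : ℝ)) * ⟪u i, u j⟫)
    (v : Fin M → Fin M → ℝ)
    (hvON : ∀ k l, ∑ j, v k j * v l j = if k = l then (1 : ℝ) else 0)
    (lam : Fin M → ℝ)
    (heig : ∀ k, K.mulVec (v k) = lam k • v k)
    (hmono : ∀ k l : Fin M, k ≤ l → lam l ≤ lam k)
    (hnonneg : ∀ k, 0 ≤ lam k)
    (dp : ℕ) (hdpM : dp ≤ M)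
    (hpos : ∀ k : Fin M, (k : ℕ) < dp → 0 < lam k)
    (hzero : ∀ k : Fin M, dp ≤ (k : ℕ) → lam k = 0)
    (ψ : Fin M → X)
    (hψ : ∀ k : Fin M, ψ k =
      (Real.sqrt M * Real.sqrt (lam k))⁻¹ • ∑ j, v k j • u j)
    {Y : Type*} [NormedAddCommGroup Y] [InnerProductSpace ℝ Y]
    (G : X →ₗ[ℝ] Y)
    (S : Matrix (Fin dp) (Fin dp) ℝ)
    (hS : ∀ i j : Fin dp, S i j = ⟪G (ψ (Fin.castLE hdpM i)), G (ψ (Fin.castLE hdpM j))⟫) :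
    ∀ w ∈ Submodule.span ℝ (ψ '' {k : Fin M | (k : ℕ) < dp}),
      ‖G w‖ ≤ Real.sqrt ‖Matrix.toEuclideanCLM (𝕜 := ℝ) S‖ * ‖w‖ := by
  classical
  have hMpos : (0 : ℝ) < (M : ℝ) := by exact_mod_cast Nat.lt_of_lt_of_le Nat.zero_lt_one hM
  -- inner products of snapshots in terms of K
  have hu : ∀ i j, ⟪u i, u j⟫ = (M : ℝ) * K i j := by
    intro i j
    rw [hK i j]
    field_simp
  -- key computation
  have key : ∀ k l : Fin M,
      ⟪(∑ j, v k j • u j), (∑ j, v l j • u j)⟫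
        = (M : ℝ) * (lam l * (if k = l then (1 : ℝ) else 0)) := by
    intro k l
    have h1 : ∀ i : Fin M, (∑ j, K i j * v l j) = lam l * v l i := by
      intro i
      have := congrFun (heig l) i
      simpa [Matrix.mulVec, dotProduct] using this
    calc ⟪(∑ j, v k j • u j), (∑ j, v l j • u j)⟫
        = ∑ i, ∑ j, v k i * (v l j * ((M : ℝ) * K i j)) := by
          simp_rw [sum_inner, inner_sum, real_inner_smul_left, real_inner_smul_right, hu]
      _ = (M : ℝ) * ∑ i, v k i * (lam l * v l i) := by
          rw [Finset.mul_sum]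
          refine Finset.sum_congr rfl fun i _ => ?_
          rw [← h1 i, Finset.mul_sum, Finset.mul_sum]
          refine Finset.sum_congr rfl fun j _ => ?_
          ring
      _ = (M : ℝ) * (lam l * (if k = l then (1 : ℝ) else 0)) := by
          rw [show (∑ i, v k i * (lam l * v l i)) = lam l * ∑ i, v k i * v l i by
            rw [Finset.mul_sum]; exact Finset.sum_congr rfl fun i _ => by ring]
          rw [hvON k l]
  -- orthonormality of the first dp POD modes
  set b : Fin dp → X := fun i => ψ (Fin.castLE hdpM i) with hb
  have hbON : Orthonormal ℝ b := by
    rw [orthonormal_iff_ite]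
    intro i j
    have hi : ((Fin.castLE hdpM i : Fin M) : ℕ) < dp := by simp
    have hj : ((Fin.castLE hdpM j : Fin M) : ℕ) < dp := by simp
    have hli := hpos _ hi
    have hlj := hpos _ hj
    have : ⟪b i, b j⟫ =
        (Real.sqrt M * Real.sqrt (lam (Fin.castLE hdpM i)))⁻¹ *
        ((Real.sqrt M * Real.sqrt (lam (Fin.castLE hdpM j)))⁻¹ *
          ((M : ℝ) * (lam (Fin.castLE hdpM j) *
            (if (Fin.castLE hdpM i : Fin M) = Fin.castLE hdpM j then (1:ℝ) else 0)))) := by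
      simp only [hb, hψ, real_inner_smul_left, real_inner_smul_right, key]
      ring
    rw [this]
    have hcast : ((Fin.castLE hdpM i : Fin M) = Fin.castLE hdpM j) ↔ i = j := by
      constructor
      · intro h; exact Fin.ext (by simpa using congrArg (Fin.val) h)
      · intro h; rw [h]
    by_cases h : i = j
    · subst h
      simp only [if_pos rfl]
      have hs1 : Real.sqrt M * Real.sqrt M = (M : ℝ) :=
        Real.mul_self_sqrt (le_of_lt hMpos)
      have hs2 : Real.sqrt (lam (Fin.castLE hdpM i)) * Real.sqrt (lam (Fin.castLE hdpM i))
          = lam (Fin.castLE hdpM i) := Real.mul_self_sqrt (le_of_lt hli)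
      have hsM : Real.sqrt (M : ℝ) ≠ 0 := by positivity
      have hsl : Real.sqrt (lam (Fin.castLE hdpM i)) ≠ 0 := by positivity
      field_simp
      nlinarith [hs1, hs2]
    · rw [if_neg h, if_neg (fun hc => h (hcast.mp hc))]
      ring
  -- main argument
  intro w hw
  have himg : ψ '' {k : Fin M | (k : ℕ) < dp} = Set.range b := by
    ext x
    constructor
    · rintro ⟨k, hk, rfl⟩
      exact ⟨⟨k.val, hk⟩, by simp [hb, Fin.castLE]⟩
    · rintro ⟨i, rfl⟩
      exact ⟨Fin.castLE hdpM i, by simp, rfl⟩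
  rw [himg] at hw
  obtain ⟨c, rfl⟩ := (Finsupp.mem_span_range_iff_exists_finsupp.mp hw)
  -- rewrite as a finite sum over Fin dp
  have hwsum : (c.sum fun i a => a • b i) = ∑ i, c i • b i := by
    rw [Finsupp.sum_fintype]; intro i; simp
  rw [hwsum]
  set w : X := ∑ i, c i • b i with hwdef
  -- norms squared
  have hnw : ⟪w, w⟫ = ∑ i, c i * c i := by
    rw [hwdef, hbON.inner_sum]
    simp
  have hGw : G w = ∑ i, c i • G (b i) := by
    rw [hwdef, map_sum]; simp
  have hnGw : ⟪G w, G w⟫ = ∑ i, ∑ j, c i * (S i j * c j) := by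
    rw [hGw]
    simp_rw [sum_inner, inner_sum, real_inner_smul_left, real_inner_smul_right]
    refine Finset.sum_congr rfl fun i _ => Finset.sum_congr rfl fun j _ => ?_
    rw [hS i j]; ring
  -- Euclidean space bound
  set x : EuclideanSpace ℝ (Fin dp) := (WithLp.equiv 2 _).symm c with hx
  set A := Matrix.toEuclideanCLM (𝕜 := ℝ) S with hA
  have hAx : A x = (WithLp.equiv 2 _).symm (S.mulVec c) :=
    Matrix.toEuclideanCLM_toLp S c
  have hquad : ⟪x, A x⟫ = ∑ i, ∑ j, c i * (S i j * c j) := by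
    rw [hAx]
    rw [PiLp.inner_apply]
    refine Finset.sum_congr rfl fun i _ => ?_
    simp only [RCLike.inner_apply, conj_trivial]
    show S.mulVec (⇑c) i * c i = ∑ j, c i * (S i j * c j)
    rw [mul_comm]
    simp [Matrix.mulVec, dotProduct, Finset.mul_sum]
  have hxn : ⟪x, x⟫ = ∑ i, c i * c i := by
    rw [PiLp.inner_apply]
    simp only [RCLike.inner_apply, conj_trivial]
    rfl
  have hbound : ⟪x, A x⟫ ≤ ‖A‖ * ⟪x, x⟫ := by
    calc ⟪x, A x⟫ ≤ ‖x‖ * ‖A x‖ := real_inner_le_norm x (A x)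
      _ ≤ ‖x‖ * (‖A‖ * ‖x‖) := by
          exact mul_le_mul_of_nonneg_left (A.le_opNorm x) (norm_nonneg x)
      _ = ‖A‖ * ⟪x, x⟫ := by rw [real_inner_self_eq_norm_mul_norm]; ring
  -- put together
  have hineq : ⟪G w, G w⟫ ≤ ‖A‖ * ⟪w, w⟫ := by
    rw [hnGw, hnw, ← hquad, ← hxn]; exact hbound
  have h1 : ‖G w‖ ^ 2 ≤ ‖A‖ * ‖w‖ ^ 2 := by
    rw [← real_inner_self_eq_norm_sq, ← real_inner_self_eq_norm_sq]
    exact hineq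
  calc ‖G w‖ = Real.sqrt (‖G w‖ ^ 2) := by rw [Real.sqrt_sq (norm_nonneg _)]
    _ ≤ Real.sqrt (‖A‖ * ‖w‖ ^ 2) := Real.sqrt_le_sqrt h1
    _ = Real.sqrt ‖A‖ * ‖w‖ := by
        rw [Real.sqrt_mul (norm_nonneg A), Real.sqrt_sq (norm_nonneg w)]
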